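/- Let g be a positive definite symmetric bilinear form on V and b an alternating bilinear form on V, and set C₊ = { x ⊕ (b(x,·) + g(x,·)) : x ∈ V } and C₋ = { x ⊕ (b(x,·) − g(x,·)) : x ∈ V }. Then V ⊕ V* = C₊ ⊕ C₋, the canonical pairing is positive definite on C₊ and negative definite on C₋, and C₋ is the orthogonal complement of C₊ with respect to the canonical pairing. -/

import Mathlib

/-- The canonical pairing on `V ⊕ V*`:  `⟨x ⊕ ξ, y ⊕ η⟩ = ½(ξ(y) + η(x))`. -/
noncomputable def canonicalPairing (V : Type*) [AddCommGroup V] [Module ℝ V]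
    (u v : V × Module.Dual ℝ V) : ℝ :=
  (u.2 v.1 + v.2 u.1) / 2

/-- Given a positive definite symmetric bilinear form `g` and an alternating form `b`
on `V`, the graphs `C₊`, `C₋` of `b + g` and `b − g` give a decomposition
`V ⊕ V* = C₊ ⊕ C₋`, with the canonical pairing positive definite on `C₊`, negative
definite on `C₋`, and `C₋` the orthogonal complement of `C₊`. -/
theorem graph_decomposition (V : Type*) [AddCommGroup V] [Module ℝ V]
    [FiniteDimensional ℝ V]
    (g b : LinearMap.BilinForm ℝ V)
    (hgsymm : ∀ x y : V, g x y = g y x)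
    (hgpos : ∀ x : V, x ≠ 0 → 0 < g x x)
    (hbalt : ∀ x : V, b x x = 0)
    (Cplus Cminus : Submodule ℝ (V × Module.Dual ℝ V))
    (hCp : Cplus = LinearMap.range (LinearMap.prod (LinearMap.id : V →ₗ[ℝ] V) (b + g)))
    (hCm : Cminus = LinearMap.range (LinearMap.prod (LinearMap.id : V →ₗ[ℝ] V) (b - g))) :
    IsCompl Cplus Cminus ∧
    (∀ u ∈ Cplus, u ≠ 0 → 0 < canonicalPairing V u u) ∧
    (∀ u ∈ Cminus, u ≠ 0 → canonicalPairing V u u < 0) ∧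
    (∀ v : V × Module.Dual ℝ V,
      v ∈ Cminus ↔ ∀ u ∈ Cplus, canonicalPairing V u v = 0) := by
  subst hCp hCm
  have hbanti : ∀ x y : V, b x y = - b y x := by
    intro x y
    have h := hbalt (x + y)
    simp only [map_add, LinearMap.add_apply, hbalt] at h
    linarith
  have hgzero : ∀ x : V, g x x = 0 → x = 0 := by
    intro x hx
    by_contra h
    exact absurd hx (ne_of_gt (hgpos x h))
  have hgndeg : g.Nondegenerate := by
    refine ⟨fun x hx => hgzero x (hx x), fun x hx => ?_⟩
    exact hgzero x (hx x)
  let e := LinearMap.BilinForm.toDual g hgndeg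
  have he : ∀ x : V, e x = g x := fun _ => rfl
  -- positivity on Cplus
  have hpos : ∀ u ∈ LinearMap.range
      (LinearMap.prod (LinearMap.id : V →ₗ[ℝ] V) (b + g)),
      u ≠ 0 → 0 < canonicalPairing V u u := by
    rintro u ⟨x, rfl⟩ hu
    have hx : x ≠ 0 := by
      intro h; apply hu; simp [LinearMap.prod_apply, h]
    have : canonicalPairing V (LinearMap.prod (LinearMap.id : V →ₗ[ℝ] V) (b + g) x)
        (LinearMap.prod (LinearMap.id : V →ₗ[ℝ] V) (b + g) x) = g x x := by
      simp [canonicalPairing, LinearMap.prod_apply, hbalt]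
    rw [this]
    exact hgpos x hx
  have hneg : ∀ u ∈ LinearMap.range
      (LinearMap.prod (LinearMap.id : V →ₗ[ℝ] V) (b - g)),
      u ≠ 0 → canonicalPairing V u u < 0 := by
    rintro u ⟨x, rfl⟩ hu
    have hx : x ≠ 0 := by
      intro h; apply hu; simp [LinearMap.prod_apply, h]
    have : canonicalPairing V (LinearMap.prod (LinearMap.id : V →ₗ[ℝ] V) (b - g) x)
        (LinearMap.prod (LinearMap.id : V →ₗ[ℝ] V) (b - g) x) = - g x x := by
      simp [canonicalPairing, LinearMap.prod_apply, hbalt]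
    rw [this]
    linarith [hgpos x hx]
  -- orthogonality
  have horth : ∀ x y : V, canonicalPairing V
      (LinearMap.prod (LinearMap.id : V →ₗ[ℝ] V) (b + g) x)
      (LinearMap.prod (LinearMap.id : V →ₗ[ℝ] V) (b - g) y) = 0 := by
    intro x y
    simp [canonicalPairing, LinearMap.prod_apply]
    have := hbanti x y
    have := hgsymm x y
    linarith
  refine ⟨?_, hpos, hneg, ?_⟩
  · rw [isCompl_iff]
    constructor
    · rw [Submodule.disjoint_def]
      rintro u ⟨x, rfl⟩ ⟨y, hy⟩
      have h1 : y = x := congrArg Prod.fst hy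
      subst h1
      have h2 : ((b - g) y) y = ((b + g) y) y := by
        have := congrArg Prod.snd hy
        simp only [LinearMap.prod_apply, Function.prod] at this
        rw [this]
      simp only [LinearMap.sub_apply, LinearMap.add_apply] at h2
      have hy0 : y = 0 := hgzero y (by linarith)
      simp [hy0]
    · rw [codisjoint_iff, eq_top_iff]
      rintro ⟨x, ξ⟩ -
      rw [Submodule.mem_sup]
      set w := e.symm (ξ - b x) with hw
      have hgw : g w = ξ - b x := by
        have := e.apply_symm_apply (ξ - b x)
        rwa [he] at this
      refine ⟨LinearMap.prod (LinearMap.id : V →ₗ[ℝ] V) (b + g) (((1:ℝ)/2) • (x + w)),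
        ⟨_, rfl⟩,
        LinearMap.prod (LinearMap.id : V →ₗ[ℝ] V) (b - g) (((1:ℝ)/2) • (x - w)),
        ⟨_, rfl⟩, ?_⟩
      simp only [LinearMap.prod_apply, Function.prod, Prod.mk_add_mk, Prod.mk.injEq,
        LinearMap.id_apply, LinearMap.id_coe, id_eq]
      constructor
      · module
      · ext z
        have hz := congrArg (fun f => f z) hgw
        simp only [LinearMap.sub_apply] at hz
        simp only [map_smul, map_add, map_sub, LinearMap.add_apply, LinearMap.sub_apply,
          LinearMap.smul_apply, smul_eq_mul]
        linarith
  · intro v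
    constructor
    · rintro ⟨y, rfl⟩ u ⟨x, rfl⟩
      exact horth x y
    · intro h
      obtain ⟨y, η⟩ := v
      refine ⟨y, ?_⟩
      simp only [LinearMap.prod_apply, Function.prod, Prod.mk.injEq]
      refine ⟨rfl, ?_⟩
      ext x
      have hx := h _ ⟨x, rfl⟩
      simp only [canonicalPairing, LinearMap.prod_apply, Function.prod,
        LinearMap.add_apply, LinearMap.sub_apply] at hx ⊢
      have h1 := hbanti x y
      have h2 := hgsymm x y
      have : b x y + g x y + η x = 0 := by
        field_simp at hx
        rw [LinearMap.id_apply] at hx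
        linarith
      linarith
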